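/- Let κ be an uncountable regular cardinal and let T ⊆ 2^{<κ} be a κ-Sacks tree. Fix a sequence (X_i)_{i<κ} of subsets of 2^κ such that for every i < κ and every s ∈ T there exists t ∈ T with s ⊆ t and [T↑t] ∩ X_i = ∅. Then there exists a branch x ∈ [T] with x ∉ X_i for all i < κ and such that {α < κ : x(α) = 0} contains a club of κ. -/

import Mathlib

open Cardinal Set

/-- A binary sequence of ordinal length. -/
structure PreSeq2 where
  len : Ordinal
  val : Ordinal → Bool

def PreSeq2.Canonical (s : PreSeq2) : Prop := ∀ i, s.len ≤ i → s.val i = false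

def PreSeq2.Ext (s t : PreSeq2) : Prop := s.len ≤ t.len ∧ ∀ i < s.len, s.val i = t.val i

noncomputable def restrictFn2 (x : Ordinal → Bool) (a : Ordinal) : PreSeq2 :=
  ⟨a, fun i => if i < a then x i else false⟩

noncomputable def PreSeq2.snoc (s : PreSeq2) (b : Bool) : PreSeq2 :=
  ⟨s.len + 1, fun i => if i < s.len then s.val i else if i = s.len then b else false⟩

def IsClubIn (c : Set Ordinal) (k : Ordinal) : Prop :=
  c ⊆ Set.Iio k ∧
  (∀ l, l < k → Order.IsSuccLimit l → (∀ a < l, ∃ b ∈ c, a ≤ b ∧ b < l) → l ∈ c) ∧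
  (∀ a < k, ∃ b ∈ c, a ≤ b)

/-- `t` is a splitting node of `T`. -/
def Splitting (T : Set PreSeq2) (t : PreSeq2) : Prop :=
  PreSeq2.snoc t false ∈ T ∧ PreSeq2.snoc t true ∈ T

/-- κ-Sacks tree: nonempty pruned `<κ`-closed tree of canonical binary sequences of
length `< κ`, in which every node has a splitting extension and unions of increasing
`<κ`-sequences of splitting nodes are splitting. -/
def IsSacks (κ : Cardinal) (T : Set PreSeq2) : Prop :=
  T.Nonempty ∧
  (∀ s ∈ T, s.len < κ.ord ∧ s.Canonical) ∧
  (∀ s ∈ T, ∀ a ≤ s.len, restrictFn2 s.val a ∈ T) ∧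
  (∀ s ∈ T, ∃ t ∈ T, PreSeq2.Ext s t ∧ s.len < t.len) ∧
  (∀ x : Ordinal → Bool, ∀ l, l < κ.ord → Order.IsSuccLimit l →
    (∀ a < l, restrictFn2 x a ∈ T) → restrictFn2 x l ∈ T) ∧
  (∀ s ∈ T, ∃ t ∈ T, PreSeq2.Ext s t ∧ Splitting T t) ∧
  (∀ x : Ordinal → Bool, ∀ l, l < κ.ord → Order.IsSuccLimit l →
    (∀ a < l, ∃ b, a ≤ b ∧ b < l ∧ Splitting T (restrictFn2 x b)) →
    Splitting T (restrictFn2 x l))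

def Branches2 (κ : Cardinal) (T : Set PreSeq2) : Set (Ordinal → Bool) :=
  { x | ∀ a < κ.ord, restrictFn2 x a ∈ T }

/-- The restriction `T↑t = {s ∈ T : s ⊆ t or t ⊆ s}`. -/
def up2 (T : Set PreSeq2) (t : PreSeq2) : Set PreSeq2 :=
  { s ∈ T | PreSeq2.Ext s t ∨ PreSeq2.Ext t s }

def root2 : PreSeq2 := ⟨0, fun _ => false⟩

open Classical in
noncomputable def uniSeq (g : Ordinal → PreSeq2) (i : Ordinal) : PreSeq2 :=
  ⟨Ordinal.bsup i (fun j _ => (g j).len),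
   fun α => if (∃ j, j < i ∧ α < (g j).len ∧ (g j).val α = true) then true else false⟩

lemma uniSeq_len (g : Ordinal → PreSeq2) (i : Ordinal) :
    (uniSeq g i).len = Ordinal.bsup i (fun j _ => (g j).len) := rfl

lemma PreSeq2.Ext.rfl (s : PreSeq2) : s.Ext s := ⟨le_rfl, fun _ _ => _root_.rfl⟩

lemma PreSeq2.Ext.trans {s t u : PreSeq2} (h1 : s.Ext t) (h2 : t.Ext u) : s.Ext u :=
  ⟨h1.1.trans h2.1, fun i hi => (h1.2 i hi).trans (h2.2 i (hi.trans_le h1.1))⟩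

lemma PreSeq2.ext_snoc (s : PreSeq2) (b : Bool) : s.Ext (s.snoc b) :=
  ⟨le_self_add, fun i hi => by simp [PreSeq2.snoc, hi]⟩

lemma PreSeq2.snoc_len (s : PreSeq2) (b : Bool) : (s.snoc b).len = s.len + 1 := _root_.rfl

lemma PreSeq2.snoc_val_len (s : PreSeq2) (b : Bool) : (s.snoc b).val s.len = b := by
  simp [PreSeq2.snoc]

lemma restrict_eq_node {f : Ordinal → Bool} {s : PreSeq2} (hc : s.Canonical)
    (h : ∀ β < s.len, f β = s.val β) : restrictFn2 f s.len = s := by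
  obtain ⟨l, v⟩ := s
  unfold restrictFn2
  congr 1
  funext β
  by_cases hb : β < l
  · simpa [hb] using h β hb
  · simp only [hb, if_false]
    exact (hc β (le_of_not_gt hb)).symm

lemma restrict_eq_of_agree {f g : Ordinal → Bool} {a : Ordinal}
    (h : ∀ β < a, f β = g β) : restrictFn2 f a = restrictFn2 g a := by
  unfold restrictFn2
  congr 1
  funext β
  by_cases hb : β < a
  · simpa [hb] using h β hb
  · simp [hb]

lemma uniSeq_congr {g g' : Ordinal → PreSeq2} {i : Ordinal}
    (h : ∀ j < i, g j = g' j) : uniSeq g i = uniSeq g' i := by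
  unfold uniSeq
  congr 1
  · have : (fun (j : Ordinal) (_ : j < i) => (g j).len) =
        (fun (j : Ordinal) (_ : j < i) => (g' j).len) :=
      funext fun j => funext fun hj => by rw [h j hj]
    rw [this]
  · funext α
    have : (∃ j, j < i ∧ α < (g j).len ∧ (g j).val α = true) ↔
        (∃ j, j < i ∧ α < (g' j).len ∧ (g' j).val α = true) := by
      constructor
      · rintro ⟨j, hj, h1, h2⟩; exact ⟨j, hj, by rwa [← h j hj], by rwa [← h j hj]⟩
      · rintro ⟨j, hj, h1, h2⟩; exact ⟨j, hj, by rwa [h j hj], by rwa [h j hj]⟩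
    rw [propext this]

lemma ord_lt_add_one (c : Ordinal) : c < c + 1 := by
  rw [Ordinal.add_one_eq_succ]; exact Order.lt_succ c

open Classical in
noncomputable def Bfun (g : Ordinal → PreSeq2) (i : Ordinal) : PreSeq2 :=
  if i = 0 then root2 else if h : ∃ j, i = j + 1 then g h.choose else uniSeq g i

lemma Bfun_zero (g : Ordinal → PreSeq2) : Bfun g 0 = root2 := by
  unfold Bfun; rw [if_pos rfl]

lemma Bfun_succ (g : Ordinal → PreSeq2) (j : Ordinal) : Bfun g (j + 1) = g j := by
  unfold Bfun
  have hne0 : (j + 1 : Ordinal) ≠ 0 :=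
    ((zero_le : (0 : Ordinal) ≤ j).trans_lt (ord_lt_add_one j)).ne'
  have hex : ∃ k : Ordinal, (j + 1 : Ordinal) = k + 1 := ⟨j, rfl⟩
  rw [if_neg hne0, dif_pos hex]
  congr 1
  have hspec := hex.choose_spec
  have h2 : Order.succ j = Order.succ hex.choose := by
    rw [← Ordinal.add_one_eq_succ, ← Ordinal.add_one_eq_succ]
    exact hspec
  exact (Order.succ_eq_succ_iff.mp h2).symm

lemma Bfun_limit (g : Ordinal → PreSeq2) (i : Ordinal) (hi : Order.IsSuccLimit i) :
    Bfun g i = uniSeq g i := by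
  unfold Bfun
  rw [if_neg hi.pos.ne', dif_neg]
  rintro ⟨j, rfl⟩
  exact Order.not_isSuccLimit_succ j (by rwa [Ordinal.add_one_eq_succ] at hi)

lemma Bfun_congr (g g' : Ordinal → PreSeq2) (i : Ordinal)
    (hgg : ∀ j < i, g j = g' j) : Bfun g i = Bfun g' i := by
  unfold Bfun
  by_cases h0 : i = 0
  · simp [h0]
  · rw [if_neg h0, if_neg h0]
    by_cases hs : ∃ j : Ordinal, i = j + 1
    · rw [dif_pos hs, dif_pos hs]
      apply hgg
      have h1 := ord_lt_add_one hs.choose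
      rwa [← hs.choose_spec] at h1
    · rw [dif_neg hs, dif_neg hs]
      exact uniSeq_congr hgg

noncomputable def tfun (sp : PreSeq2 → PreSeq2) (av : Ordinal → PreSeq2 → PreSeq2) :
    Ordinal → PreSeq2 :=
  WellFounded.fix Ordinal.lt_wf
    (fun i g => av i ((sp (Bfun (fun j => if h : j < i then g j h else root2) i)).snoc false))

lemma tfun_eq (sp : PreSeq2 → PreSeq2) (av : Ordinal → PreSeq2 → PreSeq2) (i : Ordinal) :
    tfun sp av i = av i ((sp (Bfun (tfun sp av) i)).snoc false) := by
  have h1 : tfun sp av i =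
      av i ((sp (Bfun (fun j => if _ : j < i then tfun sp av j else root2) i)).snoc false) :=
    WellFounded.fix_eq Ordinal.lt_wf _ i
  rw [h1, Bfun_congr (fun j => if h : j < i then tfun sp av j else root2) (tfun sp av) i
    (fun j hj => dif_pos hj)]

/-- Fusion through a κ-Sacks tree avoiding κ-many "avoidable" sets, producing a
branch whose `0`-set contains a club. -/
theorem sacks_branch_avoiding_with_club_of_zeros (κ : Cardinal) (hreg : κ.IsRegular)
    (hunc : Cardinal.aleph0 < κ) (T : Set PreSeq2) (hT : IsSacks κ T)
    (X : Ordinal → Set (Ordinal → Bool))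
    (hX : ∀ i < κ.ord, ∀ s ∈ T, ∃ t ∈ T, PreSeq2.Ext s t ∧
      Branches2 κ (up2 T t) ∩ X i = ∅) :
    ∃ x ∈ Branches2 κ T, (∀ i < κ.ord, x ∉ X i) ∧
      ∃ c, IsClubIn c κ.ord ∧ ∀ α ∈ c, x α = false := by
  classical
  obtain ⟨hne, hmem, hrestr, -, hlimT, hsplit, hsplitlim⟩ := hT
  have hroot : root2 ∈ T := by
    obtain ⟨s0, hs0⟩ := hne
    have h0 := hrestr s0 hs0 0 zero_le
    have he : restrictFn2 s0.val 0 = root2 := by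
      unfold restrictFn2 root2
      congr 1
      funext β
      simp
    rwa [he] at h0
  -- splitting-extension choice function
  have spEx : ∀ s : PreSeq2, ∃ u : PreSeq2,
      (s ∈ T → (u ∈ T ∧ s.Ext u ∧ Splitting T u)) ∧ (Splitting T s → u = s) := by
    intro s
    by_cases h : Splitting T s
    · exact ⟨s, fun hs => ⟨hs, PreSeq2.Ext.rfl s, h⟩, fun _ => rfl⟩
    · by_cases hs : s ∈ T
      · obtain ⟨u, hu1, hu2, hu3⟩ := hsplit s hs
        exact ⟨u, fun _ => ⟨hu1, hu2, hu3⟩, fun hsp => absurd hsp h⟩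
      · exact ⟨s, fun h' => absurd h' hs, fun _ => rfl⟩
  choose sp hsp hspId using spEx
  -- avoiding choice function
  have avEx : ∀ (i : Ordinal) (s : PreSeq2), ∃ u : PreSeq2, i < κ.ord → s ∈ T →
      u ∈ T ∧ s.Ext u ∧ Branches2 κ (up2 T u) ∩ X i = ∅ := by
    intro i s
    by_cases h : i < κ.ord ∧ s ∈ T
    · obtain ⟨u, h1, h2, h3⟩ := hX i h.1 s h.2
      exact ⟨u, fun _ _ => ⟨h1, h2, h3⟩⟩
    · exact ⟨s, fun hi hs => absurd ⟨hi, hs⟩ h⟩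
  choose av hav using avEx
  set t : Ordinal → PreSeq2 := tfun sp av with ht
  have teq : ∀ i, t i = av i ((sp (Bfun t i)).snoc false) := fun i => tfun_eq sp av i
  -- the common step lemma
  have stepLem : ∀ i, i < κ.ord → ∀ s, s ∈ T →
      av i ((sp s).snoc false) ∈ T ∧
      s.Ext (av i ((sp s).snoc false)) ∧
      (sp s).Ext (av i ((sp s).snoc false)) ∧
      (sp s).len < (av i ((sp s).snoc false)).len ∧
      (av i ((sp s).snoc false)).val (sp s).len = false ∧
      s.len ≤ (sp s).len ∧
      Splitting T (sp s) ∧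
      Branches2 κ (up2 T (av i ((sp s).snoc false))) ∩ X i = ∅ := by
    intro i hi s hs
    obtain ⟨h1, h2, h3⟩ := hsp s hs
    have hsnoc : (sp s).snoc false ∈ T := h3.1
    obtain ⟨h4, h5, h6⟩ := hav i ((sp s).snoc false) hi hsnoc
    have hext1 : (sp s).Ext ((sp s).snoc false) := PreSeq2.ext_snoc _ _
    have hext2 : (sp s).Ext (av i ((sp s).snoc false)) := hext1.trans h5
    have hlen : (sp s).len < (av i ((sp s).snoc false)).len := by
      refine lt_of_lt_of_le ?_ h5.1
      rw [PreSeq2.snoc_len]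
      exact ord_lt_add_one _
    have hval : (av i ((sp s).snoc false)).val (sp s).len = false := by
      rw [← h5.2 (sp s).len (by rw [PreSeq2.snoc_len]; exact ord_lt_add_one _)]
      exact PreSeq2.snoc_val_len _ _
    exact ⟨h4, h2.trans hext2, hext2, hlen, hval, h2.1, h3, h6⟩
  -- the main invariant
  have Inv : ∀ i, i < κ.ord →
      (t i ∈ T) ∧
      (sp (Bfun t i) ∈ T) ∧
      (∀ j, j < i → (t j).Ext (t i)) ∧
      (∀ j, j < i → (t j).len ≤ (Bfun t i).len) ∧
      ((Bfun t i).len ≤ (sp (Bfun t i)).len) ∧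
      ((sp (Bfun t i)).len < (t i).len) ∧
      (i ≤ (sp (Bfun t i)).len) ∧
      ((sp (Bfun t i)).Ext (t i)) ∧
      ((t i).val ((sp (Bfun t i)).len) = false) ∧
      (Splitting T (sp (Bfun t i))) ∧
      (Branches2 κ (up2 T (t i)) ∩ X i = ∅) ∧
      (Order.IsSuccLimit i → sp (Bfun t i) = Bfun t i) := by
    intro i
    induction i using Ordinal.induction with
    | _ i IH =>
    intro hi
    have key : (Bfun t i ∈ T) ∧ (∀ j, j < i → (t j).Ext (Bfun t i)) ∧
        (∀ j, j < i → (t j).len ≤ (Bfun t i).len) ∧ (i ≤ (Bfun t i).len) ∧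
        (Order.IsSuccLimit i → Splitting T (Bfun t i)) := by
      rcases Ordinal.zero_or_succ_or_isSuccLimit i with h0 | ⟨j, hsj⟩ | hl
      · subst h0
        rw [Bfun_zero]
        exact ⟨hroot, fun j hj => absurd hj (zero_le : (0 : Ordinal) ≤ j).not_gt,
          fun j hj => absurd hj (zero_le : (0 : Ordinal) ≤ j).not_gt, zero_le,
          fun h => absurd h Ordinal.not_isSuccLimit_zero⟩
      · have hij : i = j + 1 := by rw [Ordinal.add_one_eq_succ]; exact hsj.symm
        subst hij
        rw [Bfun_succ]
        have hjlt : j < j + 1 := ord_lt_add_one j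
        have hjκ : j < κ.ord := hjlt.trans hi
        obtain ⟨J1, J2, J3, J4, J5, J6, J7, J8, J9, J10, J11, J12⟩ := IH j hjlt hjκ
        have hjlen : j < (t j).len := lt_of_le_of_lt J7 J6
        refine ⟨J1, ?_, ?_, ?_, fun h => absurd h (by
          rw [Ordinal.add_one_eq_succ]; exact Order.not_isSuccLimit_succ j)⟩
        · intro k hk
          have hkj : k ≤ j := by
            rwa [Ordinal.add_one_eq_succ, Order.lt_succ_iff] at hk
          rcases eq_or_lt_of_le hkj with rfl | hklt
          · exact PreSeq2.Ext.rfl _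
          · exact J3 k hklt
        · intro k hk
          have hkj : k ≤ j := by
            rwa [Ordinal.add_one_eq_succ, Order.lt_succ_iff] at hk
          rcases eq_or_lt_of_le hkj with rfl | hklt
          · exact le_rfl
          · exact le_of_lt (lt_of_le_of_lt (le_trans (J4 k hklt) J5) J6)
        · rw [Ordinal.add_one_eq_succ, Order.succ_le_iff]; exact hjlen
      · -- limit case
        rw [Bfun_limit t i hl]
        have IH' := fun j (hj : j < i) => IH j hj (hj.trans hi)
        have hub : ∀ j, j < i → (t j).len ≤ (uniSeq t i).len :=
          fun j hj => Ordinal.le_bsup _ j hj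
        have hlenlt : (uniSeq t i).len < κ.ord := by
          rw [uniSeq_len]
          exact Cardinal.bsup_lt_ord_of_isRegular hreg (Cardinal.lt_ord.mp hi)
            (fun j hj => (hmem _ (IH' j hj).1).1)
        have hEj : ∀ j, j < i → j < (t j).len := by
          intro j hj
          obtain ⟨-, -, -, -, -, J6, J7, -⟩ := IH' j hj
          exact lt_of_le_of_lt J7 J6
        have hsucclt : ∀ j, j < i → (t j).len < (t (j+1)).len := by
          intro j hj
          have hj1 : j + 1 < i := by
            rw [Ordinal.add_one_eq_succ]; exact hl.succ_lt hj
          obtain ⟨-, -, -, -, J5, J6, -⟩ := IH' (j+1) hj1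
          refine lt_of_le_of_lt (le_trans ?_ J5) J6
          exact le_of_eq (congrArg PreSeq2.len (Bfun_succ t j)).symm
        have hlimit_u : Order.IsSuccLimit (uniSeq t i).len := by
          refine Ordinal.isSuccLimit_iff.mpr ⟨?_, Order.isSuccPrelimit_of_succ_lt ?_⟩
          · exact (lt_of_lt_of_le (hEj 0 hl.pos) (hub 0 hl.pos)).ne'
          · intro a ha
            rw [uniSeq_len] at ha
            obtain ⟨j, hj, haj⟩ := (Ordinal.lt_bsup _).mp ha
            have hj1 : j + 1 < i := by
              rw [Ordinal.add_one_eq_succ]; exact hl.succ_lt hj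
            calc Order.succ a ≤ (t j).len := Order.succ_le_iff.mpr haj
              _ < (t (j+1)).len := hsucclt j hj
              _ ≤ (uniSeq t i).len := hub (j+1) hj1
        have uval : ∀ j, j < i → ∀ β, β < (t j).len →
            (uniSeq t i).val β = (t j).val β := by
          intro j hj β hβ
          show (if (∃ k, k < i ∧ β < (t k).len ∧ (t k).val β = true) then true else false)
            = (t j).val β
          by_cases hv : (t j).val β = true
          · rw [if_pos ⟨j, hj, hβ, hv⟩, hv]
          · have hvf : (t j).val β = false := by
              revert hv; cases ((t j).val β) <;> simp
            rw [hvf, if_neg]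
            rintro ⟨k, hk, hβk, hvk⟩
            rcases lt_trichotomy j k with h | h | h
            · have hjk := ((IH' k hk).2.2.1 j h).2 β hβ
              rw [hjk, hvk] at hvf; exact Bool.noConfusion hvf
            · subst h; rw [hvk] at hvf; exact Bool.noConfusion hvf
            · have hkj := ((IH' j hj).2.2.1 k h).2 β hβk
              rw [← hkj, hvk] at hvf; exact Bool.noConfusion hvf
        have ucanon : (uniSeq t i).Canonical := by
          intro β hβ
          show (if (∃ k, k < i ∧ β < (t k).len ∧ (t k).val β = true) then true else false)
            = false
          rw [if_neg]
          rintro ⟨k, hk, hβk, -⟩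
          exact absurd (lt_of_lt_of_le hβk (hub k hk)) (not_lt.mpr hβ)
        have urestr : ∀ a, a < (uniSeq t i).len → restrictFn2 (uniSeq t i).val a ∈ T := by
          intro a ha
          rw [uniSeq_len] at ha
          obtain ⟨j, hj, haj⟩ := (Ordinal.lt_bsup _).mp ha
          rw [restrict_eq_of_agree (fun β hβ => uval j hj β (hβ.trans haj))]
          exact hrestr (t j) (IH' j hj).1 a haj.le
        have uself : restrictFn2 (uniSeq t i).val (uniSeq t i).len = uniSeq t i :=
          restrict_eq_node ucanon (fun β _ => rfl)
        have umem : uniSeq t i ∈ T := by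
          have := hlimT (uniSeq t i).val (uniSeq t i).len hlenlt hlimit_u urestr
          rwa [uself] at this
        have hmarkrestrict : ∀ j, j < i →
            restrictFn2 (uniSeq t i).val ((sp (Bfun t j)).len) = sp (Bfun t j) := by
          intro j hj
          obtain ⟨J1, J2, J3, J4, J5, J6, J7, J8, J9, J10, J11, J12⟩ := IH' j hj
          apply restrict_eq_node (hmem _ J2).2
          intro β hβ
          rw [uval j hj β (hβ.trans J6)]
          exact (J8.2 β hβ).symm
        have usplit : Splitting T (uniSeq t i) := by
          have hwit : ∀ a < (uniSeq t i).len, ∃ b, a ≤ b ∧ b < (uniSeq t i).len ∧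
              Splitting T (restrictFn2 (uniSeq t i).val b) := by
            intro a ha
            rw [uniSeq_len] at ha
            obtain ⟨j, hj, haj⟩ := (Ordinal.lt_bsup _).mp ha
            have hj1 : j + 1 < i := by
              rw [Ordinal.add_one_eq_succ]; exact hl.succ_lt hj
            obtain ⟨K1, K2, K3, K4, K5, K6, K7, K8, K9, K10, K11, K12⟩ := IH' (j+1) hj1
            refine ⟨(sp (Bfun t (j+1))).len, ?_, ?_, ?_⟩
            · refine haj.le.trans (le_trans ?_ K5)
              exact le_of_eq (congrArg PreSeq2.len (Bfun_succ t j)).symm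
            · exact lt_of_lt_of_le K6 (hub (j+1) hj1)
            · rw [hmarkrestrict (j+1) hj1]; exact K10
          have := hsplitlim (uniSeq t i).val (uniSeq t i).len hlenlt hlimit_u hwit
          rwa [uself] at this
        refine ⟨umem, ?_, hub, ?_, fun _ => usplit⟩
        · exact fun j hj => ⟨hub j hj, fun β hβ => (uval j hj β hβ).symm⟩
        · exact hl.le_iff_forall_le.mpr fun x hx => (hEj x hx).le.trans (hub x hx)
    obtain ⟨kmem, kext, klen, kile, ksplit⟩ := key
    obtain ⟨s1, s2, s3, s4, s5, s6, s7, s8⟩ := stepLem i hi (Bfun t i) kmem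
    rw [← teq i] at s1 s2 s3 s4 s5 s8
    exact ⟨s1, (hsp _ kmem).1, fun j hj => (kext j hj).trans s2, klen, s6, s4,
      kile.trans s6, s3, s5, s7, s8, fun h => hspId _ (ksplit h)⟩
  -- projections
  have I1 : ∀ i, i < κ.ord → t i ∈ T := fun i hi => (Inv i hi).1
  have I3 : ∀ i, i < κ.ord → ∀ j, j < i → (t j).Ext (t i) := fun i hi => (Inv i hi).2.2.1
  have I4 : ∀ i, i < κ.ord → ∀ j, j < i → (t j).len ≤ (Bfun t i).len :=
    fun i hi => (Inv i hi).2.2.2.1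
  have I5 : ∀ i, i < κ.ord → (Bfun t i).len ≤ (sp (Bfun t i)).len :=
    fun i hi => (Inv i hi).2.2.2.2.1
  have I6 : ∀ i, i < κ.ord → (sp (Bfun t i)).len < (t i).len :=
    fun i hi => (Inv i hi).2.2.2.2.2.1
  have I7 : ∀ i, i < κ.ord → i ≤ (sp (Bfun t i)).len :=
    fun i hi => (Inv i hi).2.2.2.2.2.2.1
  have I9 : ∀ i, i < κ.ord → (t i).val ((sp (Bfun t i)).len) = false :=
    fun i hi => (Inv i hi).2.2.2.2.2.2.2.2.1
  have I11 : ∀ i, i < κ.ord → Branches2 κ (up2 T (t i)) ∩ X i = ∅ :=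
    fun i hi => (Inv i hi).2.2.2.2.2.2.2.2.2.2.1
  have I12 : ∀ i, i < κ.ord → Order.IsSuccLimit i → sp (Bfun t i) = Bfun t i :=
    fun i hi => (Inv i hi).2.2.2.2.2.2.2.2.2.2.2
  have hlenT : ∀ i, i < κ.ord → (t i).len < κ.ord := fun i hi => (hmem _ (I1 i hi)).1
  have hEi : ∀ i, i < κ.ord → i < (t i).len :=
    fun i hi => lt_of_le_of_lt (I7 i hi) (I6 i hi)
  have hchain : ∀ j i, j ≤ i → i < κ.ord → (t j).Ext (t i) := by
    intro j i hle hi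
    rcases eq_or_lt_of_le hle with rfl | h
    · exact PreSeq2.Ext.rfl _
    · exact I3 i hi j h
  -- the branch
  set x : Ordinal → Bool := fun α => if α < κ.ord then (t α).val α else false with hxdef
  have xval : ∀ i, i < κ.ord → ∀ β, β < (t i).len → β < κ.ord → x β = (t i).val β := by
    intro i hi β hβ hβκ
    have hx : x β = (t β).val β := by rw [hxdef]; simp only []; rw [if_pos hβκ]
    rw [hx]
    rcases le_total β i with h | h
    · exact (hchain β i h hi).2 β (hEi β hβκ)
    · exact ((hchain i β h hβκ).2 β hβ).symm
  have xrestr : ∀ a, a < κ.ord → ∀ i, i < κ.ord → a ≤ (t i).len →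
      restrictFn2 x a = restrictFn2 (t i).val a := by
    intro a ha i hi hle
    exact restrict_eq_of_agree (fun β hβ => xval i hi β (hβ.trans_le hle) (hβ.trans ha))
  have hxbr : x ∈ Branches2 κ T := by
    intro a ha
    rw [xrestr a ha a ha (hEi a ha).le]
    exact hrestr (t a) (I1 a ha) a (hEi a ha).le
  have hxavoid : ∀ i, i < κ.ord → x ∉ X i := by
    intro i hi hxX
    have hmemB : x ∈ Branches2 κ (up2 T (t i)) := by
      intro a ha
      have hj : max a i < κ.ord := max_lt ha hi
      have haj : a ≤ (t (max a i)).len := (le_max_left a i).trans (hEi _ hj).le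
      refine ⟨?_, ?_⟩
      · rw [xrestr a ha _ hj haj]
        exact hrestr _ (I1 _ hj) a haj
      · rcases le_total a (t i).len with h | h
        · left
          refine ⟨h, fun β hβ => ?_⟩
          have hβa : β < a := hβ
          simp only [restrictFn2]
          rw [if_pos hβa]
          exact xval i hi β (hβa.trans_le h) (hβa.trans ha)
        · right
          refine ⟨h, fun β hβ => ?_⟩
          simp only [restrictFn2]
          rw [if_pos (hβ.trans_le h)]
          exact (xval i hi β hβ (hβ.trans (hlenT i hi))).symm
    exact Set.eq_empty_iff_forall_notMem.mp (I11 i hi) x ⟨hmemB, hxX⟩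
  -- the club
  have hMlt : ∀ i, i < κ.ord → (sp (Bfun t i)).len < κ.ord :=
    fun i hi => (I6 i hi).trans (hlenT i hi)
  have hMmono' : ∀ j i, j ≤ i → i < κ.ord → (sp (Bfun t j)).len ≤ (sp (Bfun t i)).len := by
    intro j i hle hi
    rcases eq_or_lt_of_le hle with rfl | h
    · exact le_rfl
    · exact le_trans (le_trans (I6 j (h.trans hi)).le (I4 i hi j h)) (I5 i hi)
  have hxM : ∀ i, i < κ.ord → x ((sp (Bfun t i)).len) = false := by
    intro i hi
    rw [xval i hi _ (I6 i hi) (hMlt i hi)]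
    exact I9 i hi
  refine ⟨x, hxbr, hxavoid, {b : Ordinal | ∃ i, i < κ.ord ∧ b = (sp (Bfun t i)).len},
    ⟨?_, ?_, ?_⟩, ?_⟩
  · rintro b ⟨i, hi, rfl⟩
    exact hMlt i hi
  · -- closed
    intro l hl hll hcof
    obtain ⟨lam, hlamS, hminS⟩ := Ordinal.lt_wf.has_min
      {i : Ordinal | l ≤ (sp (Bfun t i)).len} ⟨l, I7 l hl⟩
    have hlaml : lam ≤ l := not_lt.mp (hminS l (I7 l hl))
    have hlamκ : lam < κ.ord := lt_of_le_of_lt hlaml hl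
    have hminM : ∀ j, j < lam → (sp (Bfun t j)).len < l := by
      intro j hj
      by_contra hc2
      exact hminS j (not_lt.mp hc2) hj
    have hidx : ∀ k, k < κ.ord → (sp (Bfun t k)).len < l → k < lam := by
      intro k hk hkl
      by_contra hge
      push_neg at hge
      exact absurd (hlamS.trans (hMmono' lam k hge hk)) (not_le.mpr hkl)
    have hlamlim : Order.IsSuccLimit lam := by
      rcases Ordinal.zero_or_succ_or_isSuccLimit lam with h0 | ⟨j, hsj⟩ | h
      · exfalso
        obtain ⟨b, ⟨k, hk, rfl⟩, -, hbl⟩ := hcof 0 hll.pos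
        have := hidx k hk hbl
        rw [h0] at this
        exact (zero_le : (0 : Ordinal) ≤ k).not_gt this
      · exfalso
        have hij : lam = j + 1 := by rw [Ordinal.add_one_eq_succ]; exact hsj.symm
        have hjlam : j < lam := hij ▸ ord_lt_add_one j
        have hjl : (sp (Bfun t j)).len < l := hminM j hjlam
        have hsl : (sp (Bfun t j)).len + 1 < l := by
          rw [Ordinal.add_one_eq_succ]; exact hll.succ_lt hjl
        obtain ⟨b, ⟨k, hk, rfl⟩, hble, hbl⟩ := hcof ((sp (Bfun t j)).len + 1) hsl
        have hklam := hidx k hk hbl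
        have hkj : k ≤ j := by
          rw [hij] at hklam
          rwa [Ordinal.add_one_eq_succ, Order.lt_succ_iff] at hklam
        have h1 : (sp (Bfun t k)).len ≤ (sp (Bfun t j)).len :=
          hMmono' k j hkj (hjlam.trans hlamκ)
        exact absurd (lt_of_lt_of_le (ord_lt_add_one _) (hble.trans h1)) (lt_irrefl _)
      · exact h
    have hMlam : (sp (Bfun t lam)).len = Ordinal.bsup lam (fun j _ => (t j).len) := by
      rw [I12 lam hlamκ hlamlim, Bfun_limit t lam hlamlim, uniSeq_len]
    have hle1 : (sp (Bfun t lam)).len ≤ l := by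
      rw [hMlam]
      apply Ordinal.bsup_le
      intro j hj
      have hj1 : j + 1 < lam := by
        rw [Ordinal.add_one_eq_succ]; exact hlamlim.succ_lt hj
      have h4 : (t j).len ≤ (sp (Bfun t (j+1))).len := by
        refine le_trans ?_ (I5 (j+1) (hj1.trans hlamκ))
        exact le_of_eq (congrArg PreSeq2.len (Bfun_succ t j)).symm
      exact h4.trans (hminM (j+1) hj1).le
    exact ⟨lam, hlamκ, le_antisymm hlamS hle1⟩
  · -- unbounded
    intro a ha
    exact ⟨(sp (Bfun t a)).len, ⟨a, ha, rfl⟩, I7 a ha⟩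
  · -- zeros
    rintro α ⟨i, hi, rfl⟩
    exact hxM i hi
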